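/- For a statistical manifold (M, g, ∇), the following are equivalent: (1) R = R* (conjugate symmetry of the curvature); (2) ∇C is totally symmetric; (3) ∇̂C is totally symmetric; (4) ∇̂K is totally symmetric; (5) R(X,Y,Z,W) = −R(X,Y,W,Z) for the (0,4)-curvature tensor. -/

import Mathlib

open scoped BigOperators

namespace StatMfd

/-- Vector fields on an "abstract manifold": derivations of the algebra `A`
of smooth functions. -/
abbrev VF (A : Type*) [CommRing A] [Algebra ℝ A] := Derivation ℝ A A

variable {A : Type*} [CommRing A] [Algebra ℝ A]

/-- An affine connection on vector fields. -/
structure Conn (A : Type*) [CommRing A] [Algebra ℝ A] where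
  D : VF A → VF A → VF A
  add_left : ∀ X Y Z, D (X + Y) Z = D X Z + D Y Z
  smul_left : ∀ (f : A) (X Y), D (f • X) Y = f • D X Y
  add_right : ∀ X Y Z, D X (Y + Z) = D X Y + D X Z
  leibniz : ∀ (f : A) (X Y), D X (f • Y) = f • D X Y + (X f) • Y

/-- A pseudo-Riemannian metric: a symmetric nondegenerate `A`-bilinear form. -/
structure Metric (A : Type*) [CommRing A] [Algebra ℝ A] where
  g : VF A → VF A → A
  add_left : ∀ X Y Z, g (X + Y) Z = g X Z + g Y Z
  smul_left : ∀ (f : A) (X Y), g (f • X) Y = f * g X Y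
  symm : ∀ X Y, g X Y = g Y X
  nondeg : ∀ X, (∀ Y, g X Y = 0) → X = 0

/-- The connection `∇` is torsion free. -/
def TorsionFree (C : Conn A) : Prop := ∀ X Y, C.D X Y - C.D Y X = ⁅X, Y⁆

/-- The cubic form `C(X,Y,Z) = (∇_X g)(Y,Z)`. -/
def cubic (gm : Metric A) (C : Conn A) (X Y Z : VF A) : A :=
  X (gm.g Y Z) - gm.g (C.D X Y) Z - gm.g Y (C.D X Z)

/-- Total symmetry of a `(0,3)`-tensor (valued in `A` or in vector fields). -/
def TotSym3 {B : Type*} (T : VF A → VF A → VF A → B) : Prop :=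
  (∀ X Y Z, T X Y Z = T Y X Z) ∧ (∀ X Y Z, T X Y Z = T X Z Y)

/-- Total symmetry of a `(0,4)`-tensor. -/
def TotSym4 (T : VF A → VF A → VF A → VF A → A) : Prop :=
  (∀ X Y Z W, T X Y Z W = T Y X Z W) ∧ (∀ X Y Z W, T X Y Z W = T X Z Y W) ∧
    (∀ X Y Z W, T X Y Z W = T X Y W Z)

/-- `(g, ∇)` is a statistical structure. -/
def IsStatistical (gm : Metric A) (C : Conn A) : Prop :=
  TorsionFree C ∧ TotSym3 (cubic gm C)

/-- `∇*` is the dual connection of `∇` with respect to `g`. -/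
def IsDual (gm : Metric A) (C Cs : Conn A) : Prop :=
  ∀ X Y Z, X (gm.g Y Z) = gm.g (C.D X Y) Z + gm.g Y (Cs.D X Z)

/-- `h` is the Levi-Civita connection of `g`. -/
def IsLeviCivita (gm : Metric A) (h : Conn A) : Prop :=
  TorsionFree h ∧ ∀ X Y Z, X (gm.g Y Z) = gm.g (h.D X Y) Z + gm.g Y (h.D X Z)

/-- The difference tensor `K(X,Y) = ∇_X Y − ∇̂_X Y`. -/
def Kdiff (C h : Conn A) (X Y : VF A) : VF A := C.D X Y - h.D X Y

/-- The curvature tensor of a connection. -/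
def curv (C : Conn A) (X Y Z : VF A) : VF A :=
  C.D X (C.D Y Z) - C.D Y (C.D X Z) - C.D ⁅X, Y⁆ Z

/-- `(∇_X K)(Y,Z)` for a `(1,2)`-tensor `K`. -/
def covK (C : Conn A) (K : VF A → VF A → VF A) (X Y Z : VF A) : VF A :=
  C.D X (K Y Z) - K (C.D X Y) Z - K Y (C.D X Z)

/-- `(∇_X T)(Y,Z,W)` for a `(0,3)`-tensor `T`. -/
def covC (C : Conn A) (T : VF A → VF A → VF A → A) (X Y Z W : VF A) : A :=
  X (T Y Z W) - T (C.D X Y) Z W - T Y (C.D X Z) W - T Y Z (C.D X W)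

/-- `(∇_X T)(Y,Z)` for a `(0,2)`-tensor `T`. -/
def cov2 (C : Conn A) (T : VF A → VF A → A) (X Y Z : VF A) : A :=
  X (T Y Z) - T (C.D X Y) Z - T Y (C.D X Z)

/-- `(∇_X R)(Y,Z)W` for the curvature tensor of a connection. -/
def covR (C : Conn A) (X Y Z W : VF A) : VF A :=
  C.D X (curv C Y Z W) - curv C (C.D X Y) Z W - curv C Y (C.D X Z) W
    - curv C Y Z (C.D X W)

/-- A global frame of vector fields together with its dual coframe. -/
structure Frame (A : Type*) [CommRing A] [Algebra ℝ A] (n : ℕ) where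
  e : Fin n → VF A
  ε : Fin n → VF A → A
  ε_add : ∀ i X Y, ε i (X + Y) = ε i X + ε i Y
  ε_smul : ∀ i (f : A) X, ε i (f • X) = f * ε i X
  expand : ∀ X, X = ∑ i, ε i X • e i

/-- The Ricci curvature `Ric(Y,Z) = tr{X ↦ R(X,Y)Z}` computed in a frame. -/
def ricci {n : ℕ} (F : Frame A n) (C : Conn A) (Y Z : VF A) : A :=
  ∑ i, F.ε i (curv C (F.e i) Y Z)

/-- `τ_g(X) = tr K_X` computed in a frame. -/
def tau {n : ℕ} (F : Frame A n) (K : VF A → VF A → VF A) (X : VF A) : A :=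
  ∑ i, F.ε i (K X (F.e i))

/-- `(div^∇̂ K)(Y,Z)`, the trace of `V ↦ (∇̂_V K)(Y,Z)`, computed in a frame. -/
def divK {n : ℕ} (F : Frame A n) (h : Conn A) (K : VF A → VF A → VF A)
    (Y Z : VF A) : A :=
  ∑ i, F.ε i (covK h K (F.e i) Y Z)

/-- `(M,g,∇)` has constant curvature `k`. -/
def ConstCurv (gm : Metric A) (C : Conn A) (k : ℝ) : Prop :=
  ∀ X Y Z, curv C X Y Z = k • (gm.g Y Z • X - gm.g X Z • Y)

/-- Projective flatness of a connection, via Eisenhart's characterization: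
for `n = 2` total symmetry of `∇ Ric`, for `n ≥ 3` vanishing of the
projective curvature tensor. -/
def ProjFlat {n : ℕ} (F : Frame A n) (C : Conn A) : Prop :=
  (n = 2 ∧ TotSym3 (cov2 C (ricci F C))) ∨
    (3 ≤ n ∧ ∀ X Y Z, curv C X Y Z =
      ((n : ℝ) - 1)⁻¹ • (ricci F C Y Z • X - ricci F C X Z • Y))


lemma g_zero_left (gm : Metric A) (Y : VF A) : gm.g 0 Y = 0 := by
  have h := gm.smul_left 0 Y Y; simpa using h

lemma g_sub_left (gm : Metric A) (X Y Z : VF A) : gm.g (X - Y) Z = gm.g X Z - gm.g Y Z := by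
  have h := gm.add_left (X - Y) Y Z
  rw [sub_add_cancel] at h
  linear_combination -h

lemma g_add_right (gm : Metric A) (X Y Z : VF A) : gm.g X (Y + Z) = gm.g X Y + gm.g X Z := by
  rw [gm.symm, gm.add_left, gm.symm Y, gm.symm Z]

lemma g_sub_right (gm : Metric A) (X Y Z : VF A) : gm.g X (Y - Z) = gm.g X Y - gm.g X Z := by
  rw [gm.symm, g_sub_left, gm.symm Y, gm.symm Z]

lemma g_ext (gm : Metric A) {U V : VF A} (h : ∀ W, gm.g U W = gm.g V W) : U = V := by
  exact sub_eq_zero.mp (gm.nondeg _ (fun W => by rw [g_sub_left, h, sub_self]))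

lemma D_zero_right (C : Conn A) (X : VF A) : C.D X 0 = 0 := by
  have h := C.add_right X 0 0
  rw [add_zero] at h
  exact left_eq_add.mp h

lemma D_sub_right (C : Conn A) (X Y Z : VF A) : C.D X (Y - Z) = C.D X Y - C.D X Z := by
  have h := C.add_right X (Y - Z) Z
  rw [sub_add_cancel] at h
  rw [eq_sub_iff_add_eq, ← h]

lemma D_sub_left (C : Conn A) (X Y Z : VF A) : C.D (X - Y) Z = C.D X Z - C.D Y Z := by
  have h := C.add_left (X - Y) Y Z
  rw [sub_add_cancel] at h
  rw [eq_sub_iff_add_eq, ← h]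

section main

variable (gm : Metric A) (C Cs h : Conn A)

lemma K_symm (hC : TorsionFree C) (hh : TorsionFree h) (X Y : VF A) :
    Kdiff C h X Y = Kdiff C h Y X := by
  unfold Kdiff
  rw [sub_eq_sub_iff_sub_eq_sub, hC, hh]

lemma K_sub_left (X Y Z : VF A) :
    Kdiff C h (X - Y) Z = Kdiff C h X Z - Kdiff C h Y Z := by
  unfold Kdiff; rw [D_sub_left, D_sub_left]; abel

lemma K_sub_right (X Y Z : VF A) :
    Kdiff C h X (Y - Z) = Kdiff C h X Y - Kdiff C h X Z := by
  unfold Kdiff; rw [D_sub_right, D_sub_right]; abel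

lemma K_add_right (X Y Z : VF A) :
    Kdiff C h X (Y + Z) = Kdiff C h X Y + Kdiff C h X Z := by
  unfold Kdiff; rw [C.add_right, h.add_right]; abel

/-- cubic in terms of K -/
lemma cubic_eq (hLC : IsLeviCivita gm h) (X Y Z : VF A) :
    cubic gm C X Y Z = - gm.g (Kdiff C h X Y) Z - gm.g Y (Kdiff C h X Z) := by
  unfold cubic Kdiff
  rw [hLC.2 X Y Z, g_sub_left, g_sub_right]
  ring


lemma T_rel (hstat : IsStatistical gm C) (hLC : IsLeviCivita gm h) (X Y Z : VF A) :
    gm.g (Kdiff C h X Z) Y = gm.g (Kdiff C h Y Z) X := by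
  have e1 := cubic_eq gm C h hLC X Y Z
  have e2 := cubic_eq gm C h hLC Y X Z
  have e3 := hstat.2.1 X Y Z
  have e4 := congrArg (fun U => gm.g U Z) (K_symm C h hstat.1 hLC.1 X Y)
  have s1 := gm.symm Y (Kdiff C h X Z)
  have s2 := gm.symm X (Kdiff C h Y Z)
  linear_combination e1 - e2 - e3 - e4 - s1 + s2

lemma T_sym23 (hstat : IsStatistical gm C) (hLC : IsLeviCivita gm h) (X Y Z : VF A) :
    gm.g (Kdiff C h X Y) Z = gm.g (Kdiff C h X Z) Y := by
  have r1 := T_rel gm C h hstat hLC X Y Z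
  have r2 : gm.g (Kdiff C h Y Z) X = gm.g (Kdiff C h Z Y) X :=
    congrArg (fun U => gm.g U X) (K_symm C h hstat.1 hLC.1 Y Z)
  have r3 := T_rel gm C h hstat hLC Z X Y
  exact (r1.trans (r2.trans r3)).symm

/-- cubic = -2 T -/
lemma cubic_eq2 (hstat : IsStatistical gm C) (hLC : IsLeviCivita gm h) (X Y Z : VF A) :
    cubic gm C X Y Z = -(gm.g (Kdiff C h X Y) Z + gm.g (Kdiff C h X Y) Z) := by
  rw [cubic_eq gm C h hLC, gm.symm Y, T_sym23 gm C h hstat hLC X Z Y]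
  ring

/-- the dual connection is h - K -/
lemma Cs_eq (hstat : IsStatistical gm C) (hLC : IsLeviCivita gm h)
    (hdual : IsDual gm C Cs) (X Z : VF A) :
    Cs.D X Z = h.D X Z - Kdiff C h X Z := by
  apply g_ext gm
  intro W
  have e1 := hdual X W Z
  have e2 := hLC.2 X W Z
  have e3 := T_sym23 gm C h hstat hLC X W Z
  have s1 := gm.symm (Cs.D X Z) W
  have s2 := gm.symm (h.D X Z) W
  have s3 := gm.symm (Kdiff C h X Z) W
  have e4 : gm.g (Kdiff C h X W) Z = gm.g (C.D X W) Z - gm.g (h.D X W) Z := by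
    rw [Kdiff, g_sub_left]
  rw [g_sub_left]
  linear_combination e2 - e1 - e3 + e4 + s1 - s2

/-- fundamental duality of curvatures -/
lemma dual_curv (hdual : IsDual gm C Cs) (X Y Z W : VF A) :
    gm.g (curv C X Y Z) W = - gm.g Z (curv Cs X Y W) := by
  have r1 : ∀ (P U V : VF A), gm.g (C.D P U) V = P (gm.g U V) - gm.g U (Cs.D P V) :=
    fun P U V => by linear_combination -hdual P U V
  simp only [curv, g_sub_left, g_sub_right, r1, map_sub, Derivation.commutator_apply]
  ring

lemma curvC_decomp (hLC : IsLeviCivita gm h) (X Y Z : VF A) :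
    curv C X Y Z = curv h X Y Z + covK h (Kdiff C h) X Y Z - covK h (Kdiff C h) Y X Z
      + Kdiff C h X (Kdiff C h Y Z) - Kdiff C h Y (Kdiff C h X Z) := by
  have hCD : ∀ a b, C.D a b = h.D a b + Kdiff C h a b := fun a b => by
    unfold Kdiff; abel
  have hBr : (⁅X, Y⁆ : VF A) = h.D X Y - h.D Y X := (hLC.1 X Y).symm
  simp only [curv, covK, hCD, h.add_right, K_add_right, hBr, D_sub_left, K_sub_left]
  abel

lemma curvCs_decomp (hstat : IsStatistical gm C) (hLC : IsLeviCivita gm h)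
    (hdual : IsDual gm C Cs) (X Y Z : VF A) :
    curv Cs X Y Z = curv h X Y Z - covK h (Kdiff C h) X Y Z + covK h (Kdiff C h) Y X Z
      + Kdiff C h X (Kdiff C h Y Z) - Kdiff C h Y (Kdiff C h X Z) := by
  have hCD : ∀ a b, Cs.D a b = h.D a b - Kdiff C h a b :=
    fun a b => Cs_eq gm C Cs h hstat hLC hdual a b
  have hBr : (⁅X, Y⁆ : VF A) = h.D X Y - h.D Y X := (hLC.1 X Y).symm
  simp only [curv, covK, hCD, D_sub_right, h.add_right, K_sub_right, hBr, D_sub_left,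
    K_sub_left]
  abel


lemma covK_sym23 (hC : TorsionFree C) (hh : TorsionFree h) (X Y Z : VF A) :
    covK h (Kdiff C h) X Y Z = covK h (Kdiff C h) X Z Y := by
  unfold covK
  rw [K_symm C h hC hh Y Z, K_symm C h hC hh (h.D X Y) Z, K_symm C h hC hh Y (h.D X Z)]
  abel

/-- scalar 2-cancellation in an ℝ-algebra -/
lemma two_cancel {a b : A} (hab : a + a = b + b) : a = b := by
  have h2 : (2:ℝ) • a = (2:ℝ) • b := by rw [two_smul, two_smul]; exact hab
  calc a = (2:ℝ)⁻¹ • ((2:ℝ) • a) := by rw [smul_smul]; norm_num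
    _ = (2:ℝ)⁻¹ • ((2:ℝ) • b) := by rw [h2]
    _ = b := by rw [smul_smul]; norm_num

/-- VF 2-cancellation -/
lemma two_cancel_vf {a b : VF A} (hab : a + a = b + b) : a = b := by
  have h2 : (2:ℝ) • a = (2:ℝ) • b := by rw [two_smul, two_smul]; exact hab
  calc a = (2:ℝ)⁻¹ • ((2:ℝ) • a) := by rw [smul_smul]; norm_num
    _ = (2:ℝ)⁻¹ • ((2:ℝ) • b) := by rw [h2]
    _ = b := by rw [smul_smul]; norm_num

/-- ∇̂C in terms of ∇̂K -/
lemma covCh_eq (hstat : IsStatistical gm C) (hLC : IsLeviCivita gm h) (X Y Z W : VF A) :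
    covC h (cubic gm C) X Y Z W
      = -(gm.g (covK h (Kdiff C h) X Y Z) W + gm.g (covK h (Kdiff C h) X Y Z) W) := by
  have c1 := cubic_eq2 gm C h hstat hLC Y Z W
  have c1' : X (cubic gm C Y Z W)
      = -(X (gm.g (Kdiff C h Y Z) W) + X (gm.g (Kdiff C h Y Z) W)) := by
    rw [c1, map_neg, map_add]
  have e1 := hLC.2 X (Kdiff C h Y Z) W
  have c2 := cubic_eq2 gm C h hstat hLC (h.D X Y) Z W
  have c3 := cubic_eq2 gm C h hstat hLC Y (h.D X Z) W
  have c4 := cubic_eq2 gm C h hstat hLC Y Z (h.D X W)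
  simp only [covC, covK, g_sub_left]
  linear_combination c1' - c2 - c3 - c4 - 2 * e1


lemma cubic_add1 (U V Y Z : VF A) :
    cubic gm C (U + V) Y Z = cubic gm C U Y Z + cubic gm C V Y Z := by
  simp only [cubic, Derivation.add_apply, C.add_left, gm.add_left, g_add_right]
  ring

lemma cubic_add2 (X U V Z : VF A) :
    cubic gm C X (U + V) Z = cubic gm C X U Z + cubic gm C X V Z := by
  simp only [cubic, map_add, C.add_right, gm.add_left, g_add_right]
  ring

lemma cubic_add3 (X Y U V : VF A) :
    cubic gm C X Y (U + V) = cubic gm C X Y U + cubic gm C X Y V := by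
  simp only [cubic, map_add, C.add_right, gm.add_left, g_add_right]
  ring

lemma covC_diff (X Y Z W : VF A) :
    covC C (cubic gm C) X Y Z W = covC h (cubic gm C) X Y Z W
      - cubic gm C (Kdiff C h X Y) Z W - cubic gm C Y (Kdiff C h X Z) W
      - cubic gm C Y Z (Kdiff C h X W) := by
  have hCD : ∀ a b, C.D a b = h.D a b + Kdiff C h a b := fun a b => by
    unfold Kdiff; abel
  simp only [covC, hCD, cubic_add1, cubic_add2, cubic_add3]
  ring

lemma corr_symm (hstat : IsStatistical gm C) (hLC : IsLeviCivita gm h) (X Y Z W : VF A) :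
    cubic gm C (Kdiff C h X Y) Z W + cubic gm C Y (Kdiff C h X Z) W
      + cubic gm C Y Z (Kdiff C h X W)
    = cubic gm C (Kdiff C h Y X) Z W + cubic gm C X (Kdiff C h Y Z) W
      + cubic gm C X Z (Kdiff C h Y W) := by
  have q1 := cubic_eq2 gm C h hstat hLC (Kdiff C h X Y) Z W
  have q2 := cubic_eq2 gm C h hstat hLC Y (Kdiff C h X Z) W
  have q3 := cubic_eq2 gm C h hstat hLC Y Z (Kdiff C h X W)
  have q4 := cubic_eq2 gm C h hstat hLC (Kdiff C h Y X) Z W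
  have q5 := cubic_eq2 gm C h hstat hLC X (Kdiff C h Y Z) W
  have q6 := cubic_eq2 gm C h hstat hLC X Z (Kdiff C h Y W)
  have a1 : gm.g (Kdiff C h (Kdiff C h X Y) Z) W = gm.g (Kdiff C h (Kdiff C h Y X) Z) W :=
    congrArg (fun U => gm.g (Kdiff C h U Z) W) (K_symm C h hstat.1 hLC.1 X Y)
  have b1 := T_sym23 gm C h hstat hLC Y (Kdiff C h X Z) W
  have b2 := T_sym23 gm C h hstat hLC X (Kdiff C h Y Z) W
  have s1 := gm.symm (Kdiff C h Y W) (Kdiff C h X Z)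
  have s2 := gm.symm (Kdiff C h Y Z) (Kdiff C h X W)
  linear_combination q1 + q2 + q3 - q4 - q5 - q6 - 2*a1 - 2*b1 + 2*b2 - 2*s1 - 2*s2

lemma covC_sym23 (hstat : IsStatistical gm C) (D : Conn A) (X Y Z W : VF A) :
    covC D (cubic gm C) X Y Z W = covC D (cubic gm C) X Z Y W := by
  have c12 := hstat.2.1
  have e0 : X (cubic gm C Y Z W) = X (cubic gm C Z Y W) :=
    congrArg (fun a => X a) (c12 Y Z W)
  simp only [covC]
  linear_combination e0 - c12 (D.D X Y) Z W + c12 (D.D X Z) Y W + c12 Z Y (D.D X W)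

lemma covC_sym34 (hstat : IsStatistical gm C) (D : Conn A) (X Y Z W : VF A) :
    covC D (cubic gm C) X Y Z W = covC D (cubic gm C) X Y W Z := by
  have c23 := hstat.2.2
  have e0 : X (cubic gm C Y Z W) = X (cubic gm C Y W Z) :=
    congrArg (fun a => X a) (c23 Y Z W)
  simp only [covC]
  linear_combination e0 - c23 (D.D X Y) Z W - c23 Y (D.D X Z) W - c23 Y Z (D.D X W)


lemma keyA (hstat : IsStatistical gm C) (hLC : IsLeviCivita gm h)
    (hdual : IsDual gm C Cs) :
    (∀ X Y Z, curv C X Y Z = curv Cs X Y Z)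
      ↔ (∀ X Y Z, covK h (Kdiff C h) X Y Z = covK h (Kdiff C h) Y X Z) := by
  constructor
  · intro H X Y Z
    have h0 : curv C X Y Z - curv Cs X Y Z = 0 := sub_eq_zero.mpr (H X Y Z)
    rw [curvC_decomp gm C h hLC, curvCs_decomp gm C Cs h hstat hLC hdual] at h0
    have h1 : (covK h (Kdiff C h) X Y Z - covK h (Kdiff C h) Y X Z)
        + (covK h (Kdiff C h) X Y Z - covK h (Kdiff C h) Y X Z) = 0 := by
      rw [← h0]; abel
    have h2 : (covK h (Kdiff C h) X Y Z - covK h (Kdiff C h) Y X Z)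
        + (covK h (Kdiff C h) X Y Z - covK h (Kdiff C h) Y X Z) = 0 + 0 := by
      rw [h1, add_zero]
    exact sub_eq_zero.mp (two_cancel_vf h2)
  · intro H X Y Z
    rw [curvC_decomp gm C h hLC, curvCs_decomp gm C Cs h hstat hLC hdual, H X Y Z]
    abel

lemma keyB (hstat : IsStatistical gm C) (hLC : IsLeviCivita gm h) :
    (∀ X Y Z, covK h (Kdiff C h) X Y Z = covK h (Kdiff C h) Y X Z)
      ↔ TotSym3 (covK h (Kdiff C h)) :=
  ⟨fun H => ⟨H, fun X Y Z => covK_sym23 C h hstat.1 hLC.1 X Y Z⟩, fun H => H.1⟩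

lemma keyC (hstat : IsStatistical gm C) (hLC : IsLeviCivita gm h) :
    TotSym4 (covC h (cubic gm C))
      ↔ (∀ X Y Z, covK h (Kdiff C h) X Y Z = covK h (Kdiff C h) Y X Z) := by
  constructor
  · intro H X Y Z
    apply g_ext gm
    intro W
    have e := H.1 X Y Z W
    rw [covCh_eq gm C h hstat hLC X Y Z W, covCh_eq gm C h hstat hLC Y X Z W,
      neg_inj] at e
    exact two_cancel e
  · intro H
    refine ⟨fun X Y Z W => ?_, fun X Y Z W => covC_sym23 gm C hstat h X Y Z W,
      fun X Y Z W => covC_sym34 gm C hstat h X Y Z W⟩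
    rw [covCh_eq gm C h hstat hLC X Y Z W, covCh_eq gm C h hstat hLC Y X Z W, H X Y Z]

lemma keyD (hstat : IsStatistical gm C) (hLC : IsLeviCivita gm h) :
    TotSym4 (covC C (cubic gm C)) ↔ TotSym4 (covC h (cubic gm C)) := by
  constructor
  · intro H
    refine ⟨fun X Y Z W => ?_, fun X Y Z W => covC_sym23 gm C hstat h X Y Z W,
      fun X Y Z W => covC_sym34 gm C hstat h X Y Z W⟩
    have e := H.1 X Y Z W
    rw [covC_diff gm C h X Y Z W, covC_diff gm C h Y X Z W] at e
    linear_combination e + corr_symm gm C h hstat hLC X Y Z W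
  · intro H
    refine ⟨fun X Y Z W => ?_, fun X Y Z W => covC_sym23 gm C hstat C X Y Z W,
      fun X Y Z W => covC_sym34 gm C hstat C X Y Z W⟩
    rw [covC_diff gm C h X Y Z W, covC_diff gm C h Y X Z W]
    linear_combination H.1 X Y Z W - corr_symm gm C h hstat hLC X Y Z W

lemma keyE (hdual : IsDual gm C Cs) :
    (∀ X Y Z, curv C X Y Z = curv Cs X Y Z)
      ↔ (∀ X Y Z W, gm.g (curv C X Y Z) W = - gm.g (curv C X Y W) Z) := by
  constructor
  · intro H X Y Z W
    rw [dual_curv gm C Cs hdual X Y Z W, ← H X Y W, gm.symm Z]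
  · intro H X Y Z
    apply g_ext gm
    intro W
    have d := dual_curv gm C Cs hdual X Y W Z
    have hh := H X Y W Z
    have s := gm.symm (curv Cs X Y Z) W
    linear_combination hh - d - s

end main

/-- equivalence of: conjugate symmetry `R = R*`, total symmetry
of `∇C`, of `∇̂C`, of `∇̂K`, and skew-symmetry of the `(0,4)`-curvature in
the last two slots. -/
theorem stmt15 (gm : Metric A) (C Cs h : Conn A)
    (hstat : IsStatistical gm C) (hLC : IsLeviCivita gm h)
    (hTs : TorsionFree Cs) (hdual : IsDual gm C Cs) :
    ((∀ X Y Z, curv C X Y Z = curv Cs X Y Z) ↔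
        TotSym4 (covC C (cubic gm C))) ∧
      (TotSym4 (covC C (cubic gm C)) ↔ TotSym4 (covC h (cubic gm C))) ∧
      (TotSym4 (covC h (cubic gm C)) ↔ TotSym3 (covK h (Kdiff C h))) ∧
      (TotSym3 (covK h (Kdiff C h)) ↔
        (∀ X Y Z W, gm.g (curv C X Y Z) W = - gm.g (curv C X Y W) Z)) := by
  have kA := keyA gm C Cs h hstat hLC hdual
  have kB := keyB gm C h hstat hLC
  have kC := keyC gm C h hstat hLC
  have kD := keyD gm C h hstat hLC
  have kE := keyE gm C Cs hdual
  exact ⟨kA.trans ((kC.symm).trans kD.symm),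
    kD, kC.trans kB, kB.symm.trans (kA.symm.trans kE)⟩


end StatMfd
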